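/- Define F_0 = 1, F_1 = 0 and F_n = δ(F_{n−1}) + (n−1)·f·F_{n−2} for n ≥ 2. Then for all n ≥ 2, F_n = Σ_α ( n! / ( (2!)^{a_2}(3!)^{a_3}···(n!)^{a_n} · a_2! a_3! ··· a_n! ) ) · f^{a_2} δ(f)^{a_3} δ^2(f)^{a_4} ··· δ^{n−2}(f)^{a_n}, where the sum runs over all partitions α = (2^{a_2}, 3^{a_3}, ..., n^{a_n}) of n all of whose parts are at least 2 (so Σ_j j·a_j = n). The integer coefficient of the monomial indexed by α is the number of ways to partition a set of n people into a_j cliques of size j for each j ≥ 2. -/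

import Mathlib

set_option linter.unusedSectionVars false

/-- The coefficient of the monomial indexed by the partition `α` in `F n`:
`n! / ((2!)^{a_2} ⋯ (n!)^{a_n} · a_2! ⋯ a_n!)`, the number of ways to split `n`
people into `a_j` cliques of size `j` for each `j ≥ 2`. -/
def cliqueCoeff {n : ℕ} (α : n.Partition) : ℕ :=
  n.factorial /
    ((α.parts.map Nat.factorial).prod *
      ∏ j ∈ α.parts.toFinset, (α.parts.count j).factorial)

namespace FPF


/-- denominator -/
def D (s : Multiset ℕ) : ℕ :=
  (s.map Nat.factorial).prod * ∏ j ∈ s.toFinset, (s.count j).factorial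

lemma D_zero : D 0 = 1 := by simp [D]

lemma D_pos (s : Multiset ℕ) : 0 < D s := by
  unfold D
  refine Nat.mul_pos ?_ ?_
  · refine Multiset.prod_pos fun x hx => ?_
    obtain ⟨y, _, rfl⟩ := Multiset.mem_map.1 hx
    exact Nat.factorial_pos y
  · exact Finset.prod_pos fun j _ => Nat.factorial_pos _

lemma D_cons (a : ℕ) (s : Multiset ℕ) :
    D (a ::ₘ s) = a.factorial * (s.count a + 1) * D s := by
  unfold D
  rw [Multiset.map_cons, Multiset.prod_cons, Multiset.toFinset_cons]
  by_cases h : a ∈ s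
  · have hmem : a ∈ s.toFinset := Multiset.mem_toFinset.2 h
    have hins : insert a s.toFinset = s.toFinset := Finset.insert_eq_self.2 hmem
    rw [hins, ← Finset.mul_prod_erase s.toFinset (fun j => ((a ::ₘ s).count j).factorial) hmem,
        ← Finset.mul_prod_erase s.toFinset (fun j => (s.count j).factorial) hmem]
    have he : ∏ x ∈ s.toFinset.erase a, ((a ::ₘ s).count x).factorial
        = ∏ x ∈ s.toFinset.erase a, (s.count x).factorial := by
      refine Finset.prod_congr rfl fun x hx => ?_
      rw [Multiset.count_cons_of_ne (Finset.ne_of_mem_erase hx)]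
    rw [he, Multiset.count_cons_self, Nat.factorial_succ]
    ring
  · have h0 : s.count a = 0 := Multiset.count_eq_zero.2 h
    rw [Finset.prod_insert (by simpa using h)]
    have he : ∏ x ∈ s.toFinset, ((a ::ₘ s).count x).factorial
        = ∏ x ∈ s.toFinset, (s.count x).factorial := by
      refine Finset.prod_congr rfl fun x hx => ?_
      rw [Multiset.count_cons_of_ne (fun hxa => h (by rw [← hxa]; exact Multiset.mem_toFinset.1 hx))]
    rw [he, Multiset.count_cons_self, h0]
    simp [Nat.factorial]
    ring

lemma D_erase {a : ℕ} {s : Multiset ℕ} (h : a ∈ s) :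
    D s = a.factorial * s.count a * D (s.erase a) := by
  conv_lhs => rw [← Multiset.cons_erase h]
  rw [D_cons, Multiset.count_erase_self]
  have : s.count a - 1 + 1 = s.count a := Nat.succ_pred_eq_of_pos (Multiset.count_pos.2 h)
  rw [this]

lemma sum_erase' {a : ℕ} {s : Multiset ℕ} (h : a ∈ s) :
    (s.erase a).sum = s.sum - a := by
  have := Multiset.cons_erase h
  have h2 : s.sum = a + (s.erase a).sum := by
    conv_lhs => rw [← this]
    rw [Multiset.sum_cons]
  omega

lemma le_sum {a : ℕ} {s : Multiset ℕ} (h : a ∈ s) : a ≤ s.sum := by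
  have h2 : s.sum = a + (s.erase a).sum := by
    conv_lhs => rw [← Multiset.cons_erase h]
    rw [Multiset.sum_cons]
  omega

lemma sum_count_mul (s : Multiset ℕ) : ∑ j ∈ s.toFinset, s.count j * j = s.sum := by
  have := Finset.sum_multiset_map_count s (id : ℕ → ℕ)
  simp only [smul_eq_mul, id_eq] at this
  rw [← this, Multiset.map_id']

lemma D_dvd : ∀ (n : ℕ) (s : Multiset ℕ), s.sum = n → (0 ∉ s) → D s ∣ n.factorial := by
  intro n
  induction n using Nat.strong_induction_on with
  | _ n ih =>
    intro s hsum h0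
    rcases Multiset.empty_or_exists_mem s with rfl | ⟨a, ha⟩
    · simp [D_zero]
    · have hapos : 0 < a := Nat.pos_of_ne_zero (fun h => h0 (h ▸ ha))
      have han : a ≤ n := hsum ▸ le_sum ha
      have hn : 0 < n := lt_of_lt_of_le hapos han
      have hfac : n.factorial = ∑ j ∈ s.toFinset, s.count j * (j * (n-1).factorial) := by
        have h1 : n.factorial = n * (n-1).factorial := by
          conv_lhs => rw [show n = (n-1)+1 by omega]
          rw [Nat.factorial_succ]
          congr 1
          omega
        have h2 : ∑ j ∈ s.toFinset, s.count j * (j * (n-1).factorial)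
            = (∑ j ∈ s.toFinset, s.count j * j) * (n-1).factorial := by
          rw [Finset.sum_mul]
          exact Finset.sum_congr rfl fun j _ => by ring
        rw [h1, h2, sum_count_mul s, hsum]
      rw [hfac]
      refine Finset.dvd_sum fun j hj => ?_
      have hjs : j ∈ s := Multiset.mem_toFinset.1 hj
      have hjpos : 0 < j := Nat.pos_of_ne_zero (fun h => h0 (h ▸ hjs))
      have hjn : j ≤ n := hsum ▸ le_sum hjs
      have hesum : (s.erase j).sum = n - j := by rw [sum_erase' hjs, hsum]
      have h0e : 0 ∉ s.erase j := fun h => h0 (Multiset.mem_of_mem_erase h)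
      have h1 : D (s.erase j) ∣ (n - j).factorial := ih (n - j) (by omega) _ hesum h0e
      have h2 : j.factorial * (n-j).factorial ∣ j * (n-1).factorial := by
        have e1 : j.factorial = j * (j-1).factorial := by
          conv_lhs => rw [show j = (j-1)+1 by omega]
          rw [Nat.factorial_succ]
          congr 2
          omega
        rw [e1, mul_assoc]
        refine mul_dvd_mul_left j ?_
        have := Nat.factorial_mul_factorial_dvd_factorial_add (j-1) (n-j)
        rwa [show j - 1 + (n - j) = n - 1 by omega] at this
      calc D s = s.count j * (j.factorial * D (s.erase j)) := by rw [D_erase hjs]; ring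
        _ ∣ s.count j * (j * (n-1).factorial) :=
          mul_dvd_mul_left _ (dvd_trans (mul_dvd_mul_left _ h1) h2)

/-- The coefficient as a function of the multiset of parts. -/
def c (s : Multiset ℕ) : ℕ := (s.sum).factorial / D s

lemma c_mul_D {s : Multiset ℕ} (h0 : 0 ∉ s) : c s * D s = (s.sum).factorial :=
  Nat.div_mul_cancel (D_dvd s.sum s rfl h0)

section
variable {S : Type} [CommRing S] (δ : S → S)
  (hadd : ∀ a b : S, δ (a + b) = δ a + δ b)
  (hleibniz : ∀ a b : S, δ (a * b) = a * δ b + δ a * b)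

include hadd

lemma dzero : δ 0 = 0 := by
  have h := hadd 0 0
  simp only [add_zero] at h
  exact (left_eq_add.mp h)

lemma dsum {ι : Type} (t : Finset ι) (g : ι → S) :
    δ (∑ i ∈ t, g i) = ∑ i ∈ t, δ (g i) := by
  classical
  induction t using Finset.induction_on with
  | empty => simpa using dzero δ hadd
  | insert a t h ih => rw [Finset.sum_insert h, hadd, ih, Finset.sum_insert h]

lemma dsmul (k : ℕ) (x : S) : δ (k • x) = k • δ x := by
  induction k with
  | zero => simpa using dzero δ hadd
  | succ k ih => rw [succ_nsmul, hadd, ih, succ_nsmul]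

include hleibniz

lemma done : δ 1 = 0 := by
  have h := hleibniz 1 1
  simp only [one_mul, mul_one] at h
  exact left_eq_add.mp h

lemma deriv_multiset_prod (g : ℕ → S) (s : Multiset ℕ) :
    δ (s.map g).prod = (s.map fun j => δ (g j) * ((s.erase j).map g).prod).sum := by
  induction s using Multiset.induction with
  | empty => simpa using done δ hadd hleibniz
  | cons a t ih =>
    rw [Multiset.map_cons, Multiset.prod_cons, hleibniz, ih, Multiset.map_cons,
        Multiset.sum_cons, Multiset.erase_cons_head]
    have hmap : t.map (fun j => δ (g j) * (((a ::ₘ t).erase j).map g).prod)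
        = t.map (fun j => g a * (δ (g j) * ((t.erase j).map g).prod)) := by
      refine Multiset.map_congr rfl fun j hj => ?_
      have he : (a ::ₘ t).erase j = a ::ₘ t.erase j := by
        by_cases hja : j = a
        · subst hja
          rw [Multiset.erase_cons_head]
          exact (Multiset.cons_erase hj).symm
        · rw [Multiset.erase_cons_tail]
          exact fun h => hja h.symm
      rw [he, Multiset.map_cons, Multiset.prod_cons]
      ring
    rw [hmap, Multiset.sum_map_mul_left]
    ring

end

def P (n : ℕ) : Finset (Multiset ℕ) :=
  ((Finset.univ : Finset (Nat.Partition n)).filter fun α => ∀ j ∈ α.parts, 2 ≤ j).image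
    (fun α => α.parts)

lemma mem_P {n : ℕ} {s : Multiset ℕ} : s ∈ P n ↔ s.sum = n ∧ ∀ j ∈ s, 2 ≤ j := by
  constructor
  · intro h
    simp only [P, Finset.mem_image, Finset.mem_filter, Finset.mem_univ, true_and] at h
    obtain ⟨α, hα, rfl⟩ := h
    exact ⟨α.parts_sum, hα⟩
  · rintro ⟨h1, h2⟩
    simp only [P, Finset.mem_image, Finset.mem_filter, Finset.mem_univ, true_and]
    exact ⟨⟨s, fun {j} hj => by have := h2 j hj; omega, h1⟩, h2, rfl⟩

section
variable {S : Type} [CommRing S] (δ : S → S) (f : S)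

def m (s : Multiset ℕ) : S := (s.map fun j => δ^[j - 2] f).prod

def GG (n : ℕ) : S := ∑ s ∈ P n, c s • m δ f s

lemma GG_eq (n : ℕ) :
    GG δ f n = ∑ α : n.Partition,
      if ∀ j ∈ α.parts, 2 ≤ j then
        cliqueCoeff α • (α.parts.map fun j => δ^[j - 2] f).prod
      else 0 := by
  classical
  rw [GG, P, Finset.sum_image (fun a _ b _ hab => Nat.Partition.ext hab), Finset.sum_filter]
  refine Finset.sum_congr rfl fun α _ => ?_
  split
  · have h : α.parts.sum = n := α.parts_sum
    rw [c, m, h]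
    rfl
  · rfl

lemma GG_zero : GG δ f 0 = 1 := by
  have hP : P 0 = {0} := by
    ext s
    simp only [mem_P, Finset.mem_singleton]
    constructor
    · rintro ⟨h1, h2⟩
      rw [Multiset.eq_zero_iff_forall_notMem]
      intro a ha
      have := h2 a ha
      have : a = 0 := by
        have := Multiset.single_le_sum (fun x _ => Nat.zero_le x) a ha
        omega
      omega
    · rintro rfl
      exact ⟨rfl, fun j hj => absurd hj (Multiset.notMem_zero j)⟩
  rw [GG, hP, Finset.sum_singleton]
  simp [c, D, m]

lemma GG_one : GG δ f 1 = 0 := by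
  have hP : P 1 = ∅ := by
    ext s
    simp only [mem_P, Finset.notMem_empty, iff_false, not_and]
    intro h1 h2
    have hne : s ≠ 0 := by rintro rfl; simp at h1
    obtain ⟨a, ha⟩ := Multiset.exists_mem_of_ne_zero hne
    have := h2 a ha
    have := Multiset.single_le_sum (fun x _ => Nat.zero_le x) a ha
    omega
  rw [GG, hP, Finset.sum_empty]

end

lemma D_rel {t : Multiset ℕ} {k : ℕ} (hk : k ∈ t) (hk3 : 3 ≤ k) :
    D t * (t.count (k-1) + 1) = D ((k-1) ::ₘ t.erase k) * (k * t.count k) := by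
  rw [D_cons, Multiset.count_erase_of_ne (by omega), D_erase hk]
  have hfac : k.factorial = k * (k-1).factorial := by
    conv_lhs => rw [show k = (k-1)+1 by omega]
    rw [Nat.factorial_succ]
    congr 2
    omega
  rw [hfac]
  ring

lemma filter_not_three {t : Multiset ℕ} (hge : ∀ j ∈ t, 2 ≤ j) :
    t.toFinset.filter (fun k => ¬ 3 ≤ k) = if 2 ∈ t then ({2} : Finset ℕ) else ∅ := by
  by_cases h2 : 2 ∈ t
  · rw [if_pos h2]
    ext k
    simp only [Finset.mem_filter, Multiset.mem_toFinset, Finset.mem_singleton]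
    constructor
    · rintro ⟨hk, hk3⟩
      have := hge k hk
      omega
    · rintro rfl
      exact ⟨h2, by omega⟩
  · rw [if_neg h2]
    ext k
    simp only [Finset.mem_filter, Multiset.mem_toFinset, Finset.notMem_empty, iff_false,
      not_and]
    intro hk hk3
    have := hge k hk
    have hk2 : k = 2 := by omega
    exact h2 (hk2 ▸ hk)

lemma coeff_identity {n : ℕ} {t : Multiset ℕ} (hsum : t.sum = n + 2) (hge : ∀ j ∈ t, 2 ≤ j) :
    c t = (∑ k ∈ t.toFinset.filter (fun k => 3 ≤ k),
        c ((k-1) ::ₘ t.erase k) * (((k-1) ::ₘ t.erase k).count (k-1)))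
      + (if 2 ∈ t then (n+1) * c (t.erase 2) else 0) := by
  have h0t : (0:ℕ) ∉ t := fun h => by have := hge 0 h; omega
  refine Nat.eq_of_mul_eq_mul_right (D_pos t) ?_
  rw [c_mul_D h0t, hsum, add_mul, Finset.sum_mul]
  have hterm : ∀ k ∈ t.toFinset.filter (fun k => 3 ≤ k),
      c ((k-1) ::ₘ t.erase k) * (((k-1) ::ₘ t.erase k).count (k-1)) * D t
        = (n+1).factorial * (k * t.count k) := by
    intro k hk
    obtain ⟨hk', hk3⟩ := Finset.mem_filter.1 hk
    have hkt : k ∈ t := Multiset.mem_toFinset.1 hk'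
    have hkle : k ≤ n + 2 := hsum ▸ le_sum hkt
    have hesum : (t.erase k).sum = n + 2 - k := by rw [sum_erase' hkt, hsum]
    have hssum : ((k-1) ::ₘ t.erase k).sum = n + 1 := by
      rw [Multiset.sum_cons, hesum]; omega
    have h0s : (0:ℕ) ∉ (k-1) ::ₘ t.erase k := by
      intro h
      rcases Multiset.mem_cons.1 h with h | h
      · omega
      · exact h0t (Multiset.mem_of_mem_erase h)
    have hcount : (((k-1) ::ₘ t.erase k).count (k-1)) = t.count (k-1) + 1 := by
      rw [Multiset.count_cons_self, Multiset.count_erase_of_ne (by omega)]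
    calc c ((k-1) ::ₘ t.erase k) * (((k-1) ::ₘ t.erase k).count (k-1)) * D t
        = c ((k-1) ::ₘ t.erase k) * (D t * (t.count (k-1) + 1)) := by rw [hcount]; ring
      _ = c ((k-1) ::ₘ t.erase k) * (D ((k-1) ::ₘ t.erase k) * (k * t.count k)) := by
          rw [D_rel hkt hk3]
      _ = (c ((k-1) ::ₘ t.erase k) * D ((k-1) ::ₘ t.erase k)) * (k * t.count k) := by ring
      _ = (n+1).factorial * (k * t.count k) := by rw [c_mul_D h0s, hssum]
  rw [Finset.sum_congr rfl hterm]
  have hite : (if 2 ∈ t then (n+1) * c (t.erase 2) else 0) * D t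
      = (n+1).factorial * (if 2 ∈ t then 2 * t.count 2 else 0) := by
    by_cases h2 : 2 ∈ t
    · rw [if_pos h2, if_pos h2]
      have h0e : (0:ℕ) ∉ t.erase 2 := fun h => h0t (Multiset.mem_of_mem_erase h)
      have hesum : (t.erase 2).sum = n := by rw [sum_erase' h2, hsum]; omega
      calc (n+1) * c (t.erase 2) * D t
          = (n+1) * c (t.erase 2) * (Nat.factorial 2 * t.count 2 * D (t.erase 2)) := by
            rw [← D_erase h2]
        _ = (n+1) * (c (t.erase 2) * D (t.erase 2)) * (2 * t.count 2) := by
            have : Nat.factorial 2 = 2 := rfl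
            rw [this]; ring
        _ = (n+1) * n.factorial * (2 * t.count 2) := by rw [c_mul_D h0e, hesum]
        _ = (n+1).factorial * (2 * t.count 2) := by rw [Nat.factorial_succ]
    · simp [h2]
  rw [hite, ← Finset.mul_sum, ← mul_add]
  have hbr : (∑ k ∈ t.toFinset.filter (fun k => 3 ≤ k), k * t.count k)
      + (if 2 ∈ t then 2 * t.count 2 else 0) = n + 2 := by
    have hsplit := Finset.sum_filter_add_sum_filter_not t.toFinset (fun k => 3 ≤ k)
      (fun k => k * t.count k)
    have hneg : ∑ k ∈ t.toFinset.filter (fun k => ¬ 3 ≤ k), k * t.count k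
        = (if 2 ∈ t then 2 * t.count 2 else 0) := by
      rw [filter_not_three hge]
      by_cases h2 : 2 ∈ t
      · rw [if_pos h2, if_pos h2, Finset.sum_singleton]
      · rw [if_neg h2, if_neg h2, Finset.sum_empty]
    have htot : ∑ k ∈ t.toFinset, k * t.count k = n + 2 := by
      rw [← hsum, ← sum_count_mul t]
      exact Finset.sum_congr rfl fun k _ => mul_comm _ _
    omega
  rw [hbr]
  rw [Nat.factorial_succ (n+1), mul_comm]
section
variable {S : Type} [CommRing S] (δ : S → S) (f : S)
  (hadd : ∀ a b : S, δ (a + b) = δ a + δ b)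
  (hleibniz : ∀ a b : S, δ (a * b) = a * δ b + δ a * b)

set_option maxHeartbeats 1000000 in
include hadd hleibniz in
lemma GG_rec (n : ℕ) :
    GG δ f (n+2) = δ (GG δ f (n+1)) + (n+1) • (f * GG δ f n) := by
  classical
  have hA : δ (GG δ f (n+1))
      = ∑ s ∈ P (n+1), ∑ j ∈ s.toFinset,
          (c s * s.count j) • m δ f ((j+1) ::ₘ s.erase j) := by
    rw [GG, dsum δ hadd]
    refine Finset.sum_congr rfl fun s hs => ?_
    obtain ⟨hsum, hge⟩ := mem_P.mp hs
    rw [dsmul δ hadd, m, deriv_multiset_prod δ hadd hleibniz,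
        Finset.sum_multiset_map_count, Finset.smul_sum]
    refine Finset.sum_congr rfl fun j hj => ?_
    have hjs : j ∈ s := Multiset.mem_toFinset.1 hj
    rw [smul_smul]
    congr 1
    rw [m, Multiset.map_cons, Multiset.prod_cons]
    congr 1
    rw [show j+1-2 = (j-2)+1 by have := hge j hjs; omega, Function.iterate_succ_apply']
  have hB : (n+1) • (f * GG δ f n) = ∑ u ∈ P n, ((n+1) * c u) • m δ f (2 ::ₘ u) := by
    rw [GG, Finset.mul_sum, Finset.smul_sum]
    refine Finset.sum_congr rfl fun u hu => ?_
    rw [m, m, Multiset.map_cons, Multiset.prod_cons]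
    rw [show (2:ℕ)-2 = 0 from rfl]
    simp only [Function.iterate_zero, id_eq]
    rw [mul_smul_comm, smul_smul]
  rw [hA, hB, GG]
  have hco : ∀ t ∈ P (n+2), c t • m δ f t
      = (∑ k ∈ t.toFinset.filter (fun k => 3 ≤ k),
          (c ((k-1) ::ₘ t.erase k) * (((k-1) ::ₘ t.erase k).count (k-1))) • m δ f t)
        + (if 2 ∈ t then ((n+1) * c (t.erase 2)) • m δ f t else 0) := by
    intro t ht
    obtain ⟨hsum, hge⟩ := mem_P.mp ht
    rw [coeff_identity hsum hge, add_smul, Finset.sum_smul, ite_smul, zero_smul]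
  rw [Finset.sum_congr rfl hco, Finset.sum_add_distrib]
  refine congrArg₂ (· + ·) ?_ ?_
  · -- the δ part
    rw [Finset.sum_sigma' (P (n+2)) _ (fun t k =>
          (c ((k-1) ::ₘ t.erase k) * (((k-1) ::ₘ t.erase k).count (k-1))) • m δ f t),
        Finset.sum_sigma' (P (n+1)) _ (fun s j =>
          (c s * s.count j) • m δ f ((j+1) ::ₘ s.erase j))]
    refine Finset.sum_nbij'
      (fun p => (⟨(p.2 - 1) ::ₘ p.1.erase p.2, p.2 - 1⟩ : Σ _ : Multiset ℕ, ℕ))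
      (fun q => (⟨(q.2 + 1) ::ₘ q.1.erase q.2, q.2 + 1⟩ : Σ _ : Multiset ℕ, ℕ))
      ?_ ?_ ?_ ?_ ?_
    · rintro ⟨t, k⟩ hp
      rw [Finset.mem_sigma] at hp ⊢
      dsimp only at hp ⊢
      obtain ⟨ht, hk⟩ := hp
      obtain ⟨hk', hk3⟩ := Finset.mem_filter.1 hk
      have hkt : k ∈ t := Multiset.mem_toFinset.1 hk'
      obtain ⟨hsum, hge⟩ := mem_P.mp ht
      have hkle : k ≤ n + 2 := hsum ▸ le_sum hkt
      refine ⟨mem_P.mpr ⟨?_, ?_⟩, ?_⟩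
      · rw [Multiset.sum_cons, sum_erase' hkt, hsum]
        omega
      · intro j hj
        rcases Multiset.mem_cons.1 hj with rfl | h
        · omega
        · exact hge j (Multiset.mem_of_mem_erase h)
      · exact Multiset.mem_toFinset.2 (Multiset.mem_cons_self _ _)
    · rintro ⟨s, j⟩ hq
      rw [Finset.mem_sigma] at hq ⊢
      dsimp only at hq ⊢
      obtain ⟨hs, hj⟩ := hq
      have hjs : j ∈ s := Multiset.mem_toFinset.1 hj
      obtain ⟨hsum, hge⟩ := mem_P.mp hs
      have hj2 : 2 ≤ j := hge j hjs
      have hjle : j ≤ n + 1 := hsum ▸ le_sum hjs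
      refine ⟨mem_P.mpr ⟨?_, ?_⟩, ?_⟩
      · rw [Multiset.sum_cons, sum_erase' hjs, hsum]
        omega
      · intro i hi
        rcases Multiset.mem_cons.1 hi with rfl | h
        · omega
        · exact hge i (Multiset.mem_of_mem_erase h)
      · refine Finset.mem_filter.2 ⟨Multiset.mem_toFinset.2 (Multiset.mem_cons_self _ _), by omega⟩
    · rintro ⟨t, k⟩ hp
      rw [Finset.mem_sigma] at hp
      dsimp only at hp ⊢
      obtain ⟨ht, hk⟩ := hp
      obtain ⟨hk', hk3⟩ := Finset.mem_filter.1 hk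
      have hkt : k ∈ t := Multiset.mem_toFinset.1 hk'
      have h1 : k - 1 + 1 = k := by omega
      simp only [Multiset.erase_cons_head, h1, Multiset.cons_erase hkt]
    · rintro ⟨s, j⟩ hq
      rw [Finset.mem_sigma] at hq
      dsimp only at hq ⊢
      obtain ⟨hs, hj⟩ := hq
      have hjs : j ∈ s := Multiset.mem_toFinset.1 hj
      have h1 : j + 1 - 1 = j := by omega
      simp only [Multiset.erase_cons_head, h1, Multiset.cons_erase hjs]
    · rintro ⟨t, k⟩ hp
      rw [Finset.mem_sigma] at hp
      dsimp only at hp ⊢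
      obtain ⟨ht, hk⟩ := hp
      obtain ⟨hk', hk3⟩ := Finset.mem_filter.1 hk
      have hkt : k ∈ t := Multiset.mem_toFinset.1 hk'
      have h1 : k - 1 + 1 = k := by omega
      simp only [Multiset.erase_cons_head, h1, Multiset.cons_erase hkt]
  · -- the f part
    rw [← Finset.sum_filter]
    refine Finset.sum_nbij' (fun t => t.erase 2) (fun u => 2 ::ₘ u) ?_ ?_ ?_ ?_ ?_
    · intro t ht
      obtain ⟨ht', h2⟩ := Finset.mem_filter.1 ht
      obtain ⟨hsum, hge⟩ := mem_P.mp ht'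
      refine mem_P.mpr ⟨?_, fun j hj => hge j (Multiset.mem_of_mem_erase hj)⟩
      rw [sum_erase' h2, hsum]
      omega
    · intro u hu
      obtain ⟨hsum, hge⟩ := mem_P.mp hu
      refine Finset.mem_filter.2 ⟨mem_P.mpr ⟨?_, ?_⟩, Multiset.mem_cons_self _ _⟩
      · rw [Multiset.sum_cons, hsum]
        omega
      · intro j hj
        rcases Multiset.mem_cons.1 hj with rfl | h
        · omega
        · exact hge j h
    · intro t ht
      exact Multiset.cons_erase (Finset.mem_filter.1 ht).2
    · intro u hu
      exact Multiset.erase_cons_head 2 u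
    · intro t ht
      have h2 : 2 ∈ t := (Finset.mem_filter.1 ht).2
      rw [Multiset.cons_erase h2]

end
end FPF


/-- If `F 0 = 1`, `F 1 = 0`, and `F n = δ(F (n-1)) + (n-1)·f·F (n-2)`, then for all `n ≥ 2`,
`F n` is the sum, over partitions `α = (2^{a_2},…,n^{a_n})` of `n` with all parts at least `2`,
of the monomial `f^{a_2} δ(f)^{a_3} ⋯ δ^{n-2}(f)^{a_n}` with integer coefficient
`n!/((2!)^{a_2}⋯(n!)^{a_n}·a_2!⋯a_n!)` — the number of ways `n` people can be divided into
`a_j` cliques of size `j` for each `j ≥ 2`. -/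
theorem F_partition_formula (S : Type) [CommRing S] (δ : S → S)
    (hadd : ∀ a b : S, δ (a + b) = δ a + δ b)
    (hleibniz : ∀ a b : S, δ (a * b) = a * δ b + δ a * b)
    (f : S) (F : ℕ → S)
    (hF0 : F 0 = 1) (hF1 : F 1 = 0)
    (hFrec : ∀ n : ℕ, F (n + 2) = δ (F (n + 1)) + (n + 1) • (f * F n)) :
    ∀ n : ℕ, 2 ≤ n →
      F n = ∑ α : n.Partition,
        if ∀ j ∈ α.parts, 2 ≤ j then
          cliqueCoeff α • (α.parts.map fun j => δ^[j - 2] f).prod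
        else 0 := by
  have key : ∀ N, F N = FPF.GG δ f N := by
    intro N
    induction N using Nat.strong_induction_on with
    | _ N ih =>
      match N, ih with
      | 0, _ => rw [hF0, FPF.GG_zero]
      | 1, _ => rw [hF1, FPF.GG_one]
      | (n+2), ih =>
        rw [hFrec n, ih (n+1) (by omega), ih n (by omega),
          FPF.GG_rec δ f hadd hleibniz n]
  intro n _
  rw [key n]
  exact FPF.GG_eq δ f n
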